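/- Let A, B be real n×n matrices such that for every row index i one has |a_ii| > Σ_j |b_ij| + Σ_{j≠i} |a_ij|. Then for every real n×n matrix F, the generalized absolute value matrix equation A X − B |X| = F has exactly one solution X among real n×n matrices, where |X| denotes the entrywise absolute value of X. -/

import Mathlib

open Finset Function

/-- If for every row `i`, `|A i i| > Σ_j |B i j| + Σ_{j≠i} |A i j|`,
then for every matrix `F` the GAVME `A X − B |X| = F` has exactly one solution
`X`, where `|X|` is the entrywise absolute value. -/
theorem gavme_unique_of_diag_dominance {n : ℕ} (A B : Matrix (Fin n) (Fin n) ℝ)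
    (h : ∀ i : Fin n,
      (∑ j, |B i j|) + ∑ j ∈ Finset.univ.erase i, |A i j| < |A i i|) :
    ∀ F : Matrix (Fin n) (Fin n) ℝ,
      ∃! X : Matrix (Fin n) (Fin n) ℝ, A * X - B * (X.map fun t => |t|) = F := by
  intro F
  set s : Fin n → ℝ := fun i => (∑ j, |B i j|) + ∑ j ∈ univ.erase i, |A i j| with hsdef
  have hs0 : ∀ i, 0 ≤ s i := fun i =>
    add_nonneg (sum_nonneg fun j _ => abs_nonneg _) (sum_nonneg fun j _ => abs_nonneg _)
  have hApos : ∀ i, 0 < |A i i| := fun i => lt_of_le_of_lt (hs0 i) (h i)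
  have hA0 : ∀ i, A i i ≠ 0 := fun i => abs_pos.mp (hApos i)
  set K : NNReal := univ.sup fun i => (s i / |A i i|).toNNReal with hKdef
  have hKlt : K < 1 := by
    rw [hKdef]
    refine (Finset.sup_lt_iff (by norm_num)).mpr ?_
    intro i _
    rw [Real.toNNReal_lt_one]
    exact (div_lt_one (hApos i)).mpr (h i)
  have hcK : ∀ i, s i / |A i i| ≤ (K : ℝ) := by
    intro i
    have h1 : ((s i / |A i i|).toNNReal : ℝ) ≤ (K : ℝ) := by
      exact_mod_cast Finset.le_sup (f := fun i => (s i / |A i i|).toNNReal) (mem_univ i)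
    rwa [Real.coe_toNNReal _ (div_nonneg (hs0 i) (hApos i).le)] at h1
  -- the Jacobi iteration map
  set T : (Fin n → Fin n → ℝ) → (Fin n → Fin n → ℝ) := fun X i k =>
    (F i k + (∑ j, B i j * |X j k|) - ∑ j ∈ univ.erase i, A i j * X j k) / A i i with hTdef
  have hlip : LipschitzWith K T := by
    apply LipschitzWith.of_dist_le_mul
    intro X Y
    have hd0 : (0 : ℝ) ≤ (K : ℝ) * dist X Y := mul_nonneg K.coe_nonneg dist_nonneg
    rw [dist_pi_le_iff hd0]
    intro i
    rw [dist_pi_le_iff hd0]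
    intro k
    have hent : ∀ j, |X j k - Y j k| ≤ dist X Y := by
      intro j
      have h1 := dist_le_pi_dist X Y j
      have h2 := dist_le_pi_dist (X j) (Y j) k
      rw [Real.dist_eq] at h2
      linarith
    have hdiff : T X i k - T Y i k =
        ((∑ j, B i j * (|X j k| - |Y j k|)) -
          ∑ j ∈ univ.erase i, A i j * (X j k - Y j k)) / A i i := by
      rw [hTdef]
      simp only [mul_sub, Finset.sum_sub_distrib]
      rw [div_sub_div_same]
      ring_nf
    rw [Real.dist_eq, hdiff, abs_div]
    rw [div_le_iff₀ (hApos i)]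
    calc |(∑ j, B i j * (|X j k| - |Y j k|)) -
          ∑ j ∈ univ.erase i, A i j * (X j k - Y j k)|
        ≤ (∑ j, |B i j| * dist X Y) + ∑ j ∈ univ.erase i, |A i j| * dist X Y := by
          refine (abs_sub _ _).trans ?_
          gcongr
          · refine (Finset.abs_sum_le_sum_abs _ _).trans ?_
            refine Finset.sum_le_sum fun j _ => ?_
            rw [abs_mul]
            exact mul_le_mul_of_nonneg_left
              ((abs_abs_sub_abs_le_abs_sub _ _).trans (hent j)) (abs_nonneg _)
          · refine (Finset.abs_sum_le_sum_abs _ _).trans ?_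
            refine Finset.sum_le_sum fun j _ => ?_
            rw [abs_mul]
            exact mul_le_mul_of_nonneg_left (hent j) (abs_nonneg _)
      _ = s i * dist X Y := by rw [hsdef]; rw [← Finset.sum_mul, ← Finset.sum_mul]; ring
      _ ≤ ((K : ℝ) * dist X Y) * |A i i| := by
          have := hcK i
          rw [div_le_iff₀ (hApos i)] at this
          nlinarith [dist_nonneg (x := X) (y := Y), hApos i]
  have hfix : ∀ X : Matrix (Fin n) (Fin n) ℝ,
      IsFixedPt T X ↔ A * X - B * (X.map fun t => |t|) = F := by
    intro X
    constructor
    · intro hX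
      funext i k
      have h1 : T X i k = X i k := congrFun (congrFun hX i) k
      rw [hTdef] at h1
      simp only at h1
      rw [div_eq_iff (hA0 i)] at h1
      have h2 := Finset.sum_erase_add univ (fun j => A i j * X j k) (mem_univ i)
      simp only [Matrix.sub_apply, Matrix.mul_apply, Matrix.map_apply]
      have hc : X i k * A i i = A i i * X i k := mul_comm _ _
      linarith
    · intro hX
      funext i k
      have h1 : (∑ j, A i j * X j k) - ∑ j, B i j * |X j k| = F i k := by
        have := congrFun (congrFun hX i) k
        simpa [Matrix.sub_apply, Matrix.mul_apply, Matrix.map_apply] using this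
      have h2 := Finset.sum_erase_add univ (fun j => A i j * X j k) (mem_univ i)
      show (F i k + (∑ j, B i j * |X j k|) - ∑ j ∈ univ.erase i, A i j * X j k) / A i i
        = X i k
      rw [div_eq_iff (hA0 i)]
      linarith
  have hcontr : ContractingWith K T := ⟨hKlt, hlip⟩
  let X₀ : Fin n → Fin n → ℝ := hcontr.fixedPoint T
  refine ⟨X₀, (hfix X₀).mp hcontr.fixedPoint_isFixedPt, fun Y hY => ?_⟩
  exact hcontr.fixedPoint_unique (x := (Y : Fin n → Fin n → ℝ)) ((hfix Y).mpr hY)
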